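/- Let D be a positive integer. There exists a sequence of integers (a_M)_{M≥0} with a₀ = 1 and a real number Y such that for every z ∈ ℂ with Im z > Y, the series ∑_{M≥0} a_M · e^{2πiMz} converges absolutely and Θ_K(Dz) = Θ_K(z) · ∑_{M≥0} a_M · e^{2πiMz}. (That is, the modular function Θ_K(Dz)/Θ_K(z) has integer Fourier coefficients at the cusp ∞.) -/

import Mathlib

open Complex

/-- The theta function of `ℚ(√−3)`:
`Θ_K(z) = ∑_{(m,n) ∈ ℤ×ℤ} exp(2πi(m² + n² − mn)z)`. -/
noncomputable def ThetaK (z : ℂ) : ℂ :=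
  ∑' p : ℤ × ℤ, Complex.exp (2 * Real.pi * Complex.I *
    ((p.1 : ℂ) ^ 2 + (p.2 : ℂ) ^ 2 - (p.1 : ℂ) * (p.2 : ℂ)) * z)

namespace ThetaAux

/-- The quadratic form `m² + n² − mn`. -/
def Qi (p : ℤ × ℤ) : ℤ := p.1 ^ 2 + p.2 ^ 2 - p.1 * p.2

lemma Qi_nonneg (p : ℤ × ℤ) : 0 ≤ Qi p := by
  have h := sq_nonneg (2 * p.1 - p.2)
  have h2 := sq_nonneg p.2
  unfold Qi; nlinarith

lemma Qi_bound {p : ℤ × ℤ} {n : ℕ} (h : Qi p = n) :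
    p.1 ∈ Finset.Icc (-(2 * n : ℤ)) (2 * n) ∧ p.2 ∈ Finset.Icc (-(2 * n : ℤ)) (2 * n) := by
  obtain ⟨m, k⟩ := p
  unfold Qi at h
  simp only [Finset.mem_Icc]
  have h1 := sq_nonneg (m - k)
  have hm : m ^ 2 ≤ 2 * n := by nlinarith [sq_nonneg k]
  have hk : k ^ 2 ≤ 2 * n := by nlinarith [sq_nonneg m]
  have hm1 : 2 * m - 1 ≤ m ^ 2 := by nlinarith [sq_nonneg (m - 1)]
  have hm2 : -(2 * m) - 1 ≤ m ^ 2 := by nlinarith [sq_nonneg (m + 1)]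
  have hk1 : 2 * k - 1 ≤ k ^ 2 := by nlinarith [sq_nonneg (k - 1)]
  have hk2 : -(2 * k) - 1 ≤ k ^ 2 := by nlinarith [sq_nonneg (k + 1)]
  constructor <;> constructor <;> omega

/-- Finite box containing the fiber of the form over `n`. -/
noncomputable def box (n : ℕ) : Finset (ℤ × ℤ) :=
  (Finset.Icc (-(2 * n : ℤ)) (2 * n)) ×ˢ (Finset.Icc (-(2 * n : ℤ)) (2 * n))

/-- The fiber of the quadratic form over `n`, as a `Finset`. -/
noncomputable def fib (n : ℕ) : Finset (ℤ × ℤ) := (box n).filter (fun p => Qi p = (n : ℤ))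

lemma mem_fib {p : ℤ × ℤ} {n : ℕ} : p ∈ fib n ↔ Qi p = (n : ℤ) := by
  constructor
  · intro h; exact (Finset.mem_filter.mp h).2
  · intro h
    refine Finset.mem_filter.mpr ⟨?_, h⟩
    obtain ⟨h1, h2⟩ := Qi_bound h
    exact Finset.mem_product.mpr ⟨h1, h2⟩

/-- The representation numbers of the form. -/
noncomputable def rr (n : ℕ) : ℕ := (fib n).card

lemma rr_zero : rr 0 = 1 := by decide

lemma rr_le (n : ℕ) : (rr n : ℤ) ≤ 25 ^ n := by
  have hcard : rr n ≤ (4 * n + 1) ^ 2 := by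
    have h1 : rr n ≤ (box n).card := Finset.card_filter_le _ _
    have h2 : (box n).card = (4 * n + 1) * (4 * n + 1) := by
      rw [box, Finset.card_product, Int.card_Icc]
      have : (2 * (n : ℤ) + 1 - -(2 * n)) = (4 * n + 1 : ℕ) := by push_cast; ring
      rw [this, Int.toNat_natCast]
    rw [h2] at h1; nlinarith
  have key : ∀ m : ℕ, (4 * (m : ℤ) + 1) ^ 2 ≤ 25 ^ m := by
    intro m
    induction m with
    | zero => norm_num
    | succ k ih =>
      push_cast [pow_succ]
      nlinarith [ih, Int.natCast_nonneg k, pow_pos (show (0:ℤ) < 25 by norm_num) k]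
  calc (rr n : ℤ) ≤ (4 * (n : ℤ) + 1) ^ 2 := by exact_mod_cast hcard
    _ ≤ 25 ^ n := key n

/-- `D`-th dilation coefficients. -/
noncomputable def rd (D : ℕ) (M : ℕ) : ℤ := if D ∣ M then (rr (M / D) : ℤ) else 0

lemma rd_le (D : ℕ) (M : ℕ) : |rd D M| ≤ 25 ^ M := by
  unfold rd
  split
  · rw [_root_.abs_of_nonneg (by positivity)]
    calc (rr (M / D) : ℤ) ≤ 25 ^ (M / D) := rr_le _
      _ ≤ 25 ^ M := pow_le_pow_right₀ (by norm_num) (Nat.div_le_self _ _)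
  · simp only [abs_zero]; positivity

/-- The Fourier coefficients of `Θ_K(Dz)/Θ_K(z)`. -/
noncomputable def Acoef (D : ℕ) : ℕ → ℤ
  | 0 => 1
  | (M + 1) => rd D (M + 1) - ∑ i : Fin (M + 1), (rr (M + 1 - (i : ℕ)) : ℤ) * Acoef D i
  decreasing_by exact i.2

lemma Acoef_succ (D M : ℕ) :
    Acoef D (M + 1)
      = rd D (M + 1) - ∑ i ∈ Finset.range (M + 1), (rr (M + 1 - i) : ℤ) * Acoef D i := by
  rw [Acoef, Fin.sum_univ_eq_sum_range (fun i => (rr (M + 1 - i) : ℤ) * Acoef D i)]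

/-- Convolution identity defining `Acoef`. -/
lemma conv (D : ℕ) (hD : 0 < D) (M : ℕ) :
    ∑ kl ∈ Finset.HasAntidiagonal.antidiagonal M, (rr kl.1 : ℤ) * Acoef D kl.2 = rd D M := by
  rw [Finset.Nat.sum_antidiagonal_eq_sum_range_succ_mk]
  cases M with
  | zero =>
    simp [Acoef, rd, rr_zero, Nat.zero_div]
  | succ M =>
    rw [Finset.sum_range_succ']
    have hrefl : ∑ i ∈ Finset.range (M + 1), (rr (M + 1 - i) : ℤ) * Acoef D i
        = ∑ i ∈ Finset.range (M + 1), (rr (i + 1) : ℤ) * Acoef D (M + 1 - (i + 1)) := by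
      rw [← Finset.sum_range_reflect]
      refine Finset.sum_congr rfl (fun i hi => ?_)
      rw [Finset.mem_range] at hi
      have h1 : M + 1 - (M + 1 - 1 - i) = i + 1 := by omega
      have h2 : M + 1 - 1 - i = M + 1 - (i + 1) := by omega
      rw [h1, h2]
    rw [show (∑ i ∈ Finset.range (M + 1), (rr (i + 1) : ℤ) * Acoef D (M + 1 - (i + 1)))
        = ∑ i ∈ Finset.range (M + 1), (rr (M + 1 - i) : ℤ) * Acoef D i from hrefl.symm]
    simp only [Nat.sub_zero, rr_zero, Nat.cast_one, one_mul]
    rw [Acoef_succ]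
    ring

lemma sum_bound (M : ℕ) :
    ∑ i ∈ Finset.range (M + 1), (25 : ℤ) ^ (M + 1 - i) * 75 ^ i ≤ 50 * 75 ^ M := by
  induction M with
  | zero => norm_num
  | succ M ih =>
    rw [Finset.sum_range_succ]
    have : ∑ i ∈ Finset.range (M + 1), (25 : ℤ) ^ (M + 2 - i) * 75 ^ i
        = 25 * ∑ i ∈ Finset.range (M + 1), (25 : ℤ) ^ (M + 1 - i) * 75 ^ i := by
      rw [Finset.mul_sum]
      refine Finset.sum_congr rfl (fun i hi => ?_)
      rw [Finset.mem_range] at hi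
      rw [show M + 2 - i = (M + 1 - i) + 1 by omega, pow_succ]
      ring
    rw [show M + 1 + 1 = M + 2 from rfl, this,
      show M + 2 - (M + 1) = 1 by omega, pow_succ (75:ℤ) M]
    have h75 : (0:ℤ) < 75 ^ M := by positivity
    nlinarith

lemma Acoef_bound (D : ℕ) : ∀ M, |Acoef D M| ≤ 75 ^ M := by
  intro M
  induction M using Nat.strong_induction_on with
  | _ M ih =>
    cases M with
    | zero => simp [Acoef]
    | succ M =>
      rw [Acoef_succ]
      have h1 : |rd D (M + 1)| ≤ 25 ^ (M + 1) := rd_le D (M + 1)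
      have h2 : |∑ i ∈ Finset.range (M + 1), (rr (M + 1 - i) : ℤ) * Acoef D i|
          ≤ ∑ i ∈ Finset.range (M + 1), (25 : ℤ) ^ (M + 1 - i) * 75 ^ i := by
        refine (Finset.abs_sum_le_sum_abs _ _).trans ?_
        refine Finset.sum_le_sum (fun i hi => ?_)
        rw [Finset.mem_range] at hi
        rw [abs_mul]
        have ha : |(rr (M + 1 - i) : ℤ)| ≤ 25 ^ (M + 1 - i) := by
          rw [_root_.abs_of_nonneg (by positivity)]; exact rr_le _
        have hb : |Acoef D i| ≤ 75 ^ i := ih i (by omega)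
        exact mul_le_mul ha hb (abs_nonneg _) (by positivity)
      have h3 := sum_bound M
      have h25 : (25:ℤ) ^ (M + 1) ≤ 25 * 75 ^ M := by
        rw [pow_succ]
        have : (25:ℤ) ^ M ≤ 75 ^ M := pow_le_pow_left₀ (by norm_num) (by norm_num) M
        nlinarith [pow_pos (show (0:ℤ) < 25 by norm_num) M]
      calc |rd D (M + 1) - ∑ i ∈ Finset.range (M + 1), (rr (M + 1 - i) : ℤ) * Acoef D i|
          ≤ |rd D (M + 1)| + |∑ i ∈ Finset.range (M + 1), (rr (M + 1 - i) : ℤ) * Acoef D i| :=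
            abs_sub _ _
        _ ≤ 25 ^ (M + 1) + 50 * 75 ^ M := by linarith
        _ ≤ 75 ^ (M + 1) := by
            rw [pow_succ (75:ℤ) M]
            linarith

open Real in
lemma norm_cexp_int (w : ℤ) (z : ℂ) :
    ‖cexp (2 * (Real.pi : ℂ) * I * (w : ℂ) * z)‖ = rexp (-(2 * Real.pi * w) * z.im) := by
  rw [Complex.norm_exp]
  congr 1
  have h : (2 * (Real.pi : ℂ) * I * (w : ℂ) * z) = ((2 * Real.pi * w : ℝ) : ℂ) * (z * I) := by
    push_cast; ring
  rw [h, Complex.re_ofReal_mul, Complex.mul_I_re]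
  ring

lemma natAbs_add_le (p : ℤ × ℤ) : (p.1.natAbs + p.2.natAbs : ℤ) ≤ 2 * Qi p := by
  obtain ⟨m, k⟩ := p
  have hm : |m| ≤ m ^ 2 := by nlinarith [_root_.sq_abs m, abs_nonneg m, sq_nonneg (|m| - 1)]
  have hk : |k| ≤ k ^ 2 := by nlinarith [_root_.sq_abs k, abs_nonneg k, sq_nonneg (|k| - 1)]
  have h1 := sq_nonneg (m - k)
  have h2 : (m.natAbs : ℤ) = |m| := Int.abs_eq_natAbs m ▸ rfl
  have h3 : (k.natAbs : ℤ) = |k| := Int.abs_eq_natAbs k ▸ rfl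
  unfold Qi
  push_cast [h2, h3]
  nlinarith

set_option maxHeartbeats 1000000 in
open Real in
lemma summable_theta_norm {z : ℂ} (hz : 0 < z.im) :
    Summable fun p : ℤ × ℤ => ‖cexp (2 * (Real.pi : ℂ) * I * (Qi p : ℂ) * z)‖ := by
  set x := rexp (-Real.pi * z.im) with hx
  have hx0 : 0 ≤ x := (Real.exp_pos _).le
  have hx1 : x < 1 := by
    rw [hx, Real.exp_lt_one_iff]
    nlinarith [Real.pi_pos]
  have h1 : Summable fun n : ℤ => x ^ n.natAbs := by
    apply Summable.of_nat_of_neg <;> simpa using summable_geometric_of_lt_one hx0 hx1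
  have h2 : Summable fun p : ℤ × ℤ => x ^ p.1.natAbs * x ^ p.2.natAbs :=
    h1.mul_of_nonneg h1 (fun n => pow_nonneg hx0 _) (fun n => pow_nonneg hx0 _)
  refine h2.of_nonneg_of_le (fun _ => norm_nonneg _) (fun p => ?_)
  rw [norm_cexp_int, ← pow_add, ← Real.exp_nat_mul]
  apply Real.exp_le_exp.mpr
  have h := (Int.cast_le (R := ℝ)).mpr (natAbs_add_le p)
  push_cast at h ⊢
  have e1 : ((p.1.natAbs : ℕ) : ℝ) = |((p.1 : ℤ) : ℝ)| := by
    rw [Nat.cast_natAbs]; push_cast; ring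
  have e2 : ((p.2.natAbs : ℕ) : ℝ) = |((p.2 : ℤ) : ℝ)| := by
    rw [Nat.cast_natAbs]; push_cast; ring
  rw [e1, e2]
  have hpy : (0 : ℝ) < Real.pi * z.im := mul_pos Real.pi_pos hz
  nlinarith [mul_le_mul_of_nonneg_right h hpy.le]

lemma hasSum_theta {z : ℂ} (hz : 0 < z.im) :
    HasSum (fun n : ℕ => (rr n : ℂ) * cexp (2 * (Real.pi : ℂ) * I * z) ^ n) (ThetaK z) := by
  have hsum : Summable fun p : ℤ × ℤ => cexp (2 * (Real.pi : ℂ) * I * (Qi p : ℂ) * z) :=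
    (summable_theta_norm hz).of_norm
  have hTh : ThetaK z = ∑' p : ℤ × ℤ, cexp (2 * (Real.pi : ℂ) * I * (Qi p : ℂ) * z) := by
    unfold ThetaK
    refine tsum_congr fun p => ?_
    congr 1
    unfold Qi
    push_cast
    ring
  have hfib := hsum.hasSum.tsum_fiberwise (fun p => (Qi p).toNat)
  have heq : ∀ n : ℕ,
      (∑' p : (fun q : ℤ × ℤ => (Qi q).toNat) ⁻¹' {n},
        cexp (2 * (Real.pi : ℂ) * I * (Qi (p : ℤ × ℤ) : ℂ) * z))
      = (rr n : ℂ) * cexp (2 * (Real.pi : ℂ) * I * z) ^ n := by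
    intro n
    have hset : (fun q : ℤ × ℤ => (Qi q).toNat) ⁻¹' {n} = ↑(fib n) := by
      ext p
      have h0 := Qi_nonneg p
      simp only [Set.mem_preimage, Set.mem_singleton_iff, Finset.mem_coe, mem_fib]
      omega
    rw [hset, Finset.tsum_subtype' (fib n)
      (fun p => cexp (2 * (Real.pi : ℂ) * I * (Qi p : ℂ) * z))]
    have : ∀ p ∈ fib n, cexp (2 * (Real.pi : ℂ) * I * (Qi p : ℂ) * z)
        = cexp (2 * (Real.pi : ℂ) * I * z) ^ n := by
      intro p hp
      rw [mem_fib] at hp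
      rw [hp, ← Complex.exp_nat_mul]
      congr 1
      push_cast
      ring
    rw [Finset.sum_congr rfl this, Finset.sum_const, rr, nsmul_eq_mul]
  rw [hTh]
  exact (funext heq : _) ▸ hfib

open Real in
lemma norm_c (z : ℂ) : ‖cexp (2 * (Real.pi : ℂ) * I * z)‖ = rexp (-(2 * Real.pi) * z.im) := by
  have h := norm_cexp_int 1 z
  push_cast at h
  simpa using h

open Real in
lemma norm_c_lt {z : ℂ} (hz : 1 < z.im) : 75 * ‖cexp (2 * (Real.pi : ℂ) * I * z)‖ < 1 := by
  rw [norm_c]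
  have h6 : (6 : ℝ) ≤ 2 * Real.pi * z.im := by nlinarith [Real.pi_gt_three]
  have h75 : (75 : ℝ) < rexp (2 * Real.pi * z.im) := by
    have h1 : (2.7182818283 : ℝ) ^ (6 : ℕ) ≤ rexp 1 ^ (6 : ℕ) :=
      pow_le_pow_left₀ (by norm_num) Real.exp_one_gt_d9.le 6
    have h2 : rexp 1 ^ (6 : ℕ) = rexp 6 := by
      rw [← Real.exp_nat_mul]; norm_num
    have h3 : rexp 6 ≤ rexp (2 * Real.pi * z.im) := Real.exp_le_exp.mpr h6
    nlinarith
  have key : rexp (-(2 * Real.pi) * z.im) = (rexp (2 * Real.pi * z.im))⁻¹ := by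
    rw [← Real.exp_neg]; ring_nf
  rw [key]
  rw [mul_inv_lt_iff₀ (Real.exp_pos _)]
  linarith

lemma summable_norm_A (D : ℕ) {c : ℂ} (hc : 75 * ‖c‖ < 1) :
    Summable fun M : ℕ => ‖(Acoef D M : ℂ) * c ^ M‖ := by
  have hc0 : 0 ≤ 75 * ‖c‖ := by positivity
  refine Summable.of_nonneg_of_le (fun _ => norm_nonneg _) (fun M => ?_)
    (summable_geometric_of_lt_one hc0 hc)
  rw [norm_mul, norm_pow, mul_pow]
  have hA : ‖(Acoef D M : ℂ)‖ ≤ (75 : ℝ) ^ M := by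
    rw [Complex.norm_intCast]
    have := Acoef_bound D M
    calc |((Acoef D M : ℤ) : ℝ)| = ((|Acoef D M| : ℤ) : ℝ) := by push_cast; ring
      _ ≤ (((75 : ℤ) ^ M : ℤ) : ℝ) := by exact_mod_cast this
      _ = (75 : ℝ) ^ M := by push_cast; ring
  exact mul_le_mul_of_nonneg_right hA (by positivity)

lemma summable_norm_r {c : ℂ} (hc : 75 * ‖c‖ < 1) :
    Summable fun n : ℕ => ‖(rr n : ℂ) * c ^ n‖ := by
  have hc0 : 0 ≤ 75 * ‖c‖ := by positivity
  refine Summable.of_nonneg_of_le (fun _ => norm_nonneg _) (fun M => ?_)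
    (summable_geometric_of_lt_one hc0 hc)
  rw [norm_mul, norm_pow, mul_pow]
  have hA : ‖(rr M : ℂ)‖ ≤ (75 : ℝ) ^ M := by
    rw [Complex.norm_natCast]
    have h1 : (rr M : ℤ) ≤ 25 ^ M := rr_le M
    have h2 : ((rr M : ℤ) : ℝ) ≤ (((25 : ℤ) ^ M : ℤ) : ℝ) := by exact_mod_cast h1
    push_cast at h2
    calc (rr M : ℝ) ≤ (25 : ℝ) ^ M := h2
      _ ≤ (75 : ℝ) ^ M := by gcongr <;> norm_num
  exact mul_le_mul_of_nonneg_right hA (by positivity)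

end ThetaAux

open ThetaAux in
/-- The modular function `Θ_K(Dz)/Θ_K(z)` has an absolutely convergent Fourier
expansion at `∞` with integer coefficients and leading coefficient `1`. -/
theorem ThetaK_ratio_integral_Fourier (D : ℕ) (hD : 0 < D) :
    ∃ (A : ℕ → ℤ) (Y : ℝ), A 0 = 1 ∧
      ∀ z : ℂ, Y < z.im →
        Summable (fun M : ℕ =>
          ‖(A M : ℂ) * Complex.exp (2 * Real.pi * Complex.I * (M : ℂ) * z)‖) ∧
        ThetaK ((D : ℂ) * z)
          = ThetaK z *
            ∑' M : ℕ, (A M : ℂ) * Complex.exp (2 * Real.pi * Complex.I * (M : ℂ) * z) := by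
  refine ⟨Acoef D, 1, by rw [Acoef], fun z hz => ?_⟩
  have hz0 : (0 : ℝ) < z.im := lt_trans one_pos hz
  set c := cexp (2 * (Real.pi : ℂ) * I * z) with hc
  have h75 : 75 * ‖c‖ < 1 := norm_c_lt hz
  have hexpM : ∀ M : ℕ, cexp (2 * (Real.pi : ℂ) * I * (M : ℂ) * z) = c ^ M := by
    intro M
    rw [hc, ← Complex.exp_nat_mul]
    congr 1
    push_cast
    ring
  have SA := summable_norm_A D h75
  have SR := summable_norm_r h75
  constructor
  · simpa only [hexpM] using SA
  · have h1 := hasSum_theta hz0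
    have hDz : (0 : ℝ) < ((D : ℂ) * z).im := by
      have h : ((D : ℂ) * z).im = D * z.im := by simp [Complex.mul_im]
      rw [h]
      exact mul_pos (by exact_mod_cast hD) hz0
    have hcD : cexp (2 * (Real.pi : ℂ) * I * ((D : ℂ) * z)) = c ^ D := by
      rw [hc, ← Complex.exp_nat_mul]
      congr 1
      ring
    have h2 := hasSum_theta hDz
    rw [hcD] at h2
    have cauchy := tsum_mul_tsum_eq_tsum_sum_antidiagonal_of_summable_norm SR SA
    have hconv : ∀ M : ℕ, (∑ kl ∈ Finset.HasAntidiagonal.antidiagonal M,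
        ((rr kl.1 : ℂ) * c ^ kl.1) * ((Acoef D kl.2 : ℂ) * c ^ kl.2)) = (rd D M : ℂ) * c ^ M := by
      intro M
      have hterm : ∀ kl ∈ Finset.HasAntidiagonal.antidiagonal M,
          ((rr kl.1 : ℂ) * c ^ kl.1) * ((Acoef D kl.2 : ℂ) * c ^ kl.2)
          = (((rr kl.1 : ℤ) * Acoef D kl.2 : ℤ) : ℂ) * c ^ M := by
        intro kl hkl
        have hsum : kl.1 + kl.2 = M := by rwa [Finset.HasAntidiagonal.mem_antidiagonal] at hkl
        rw [← hsum, pow_add]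
        push_cast
        ring
      rw [Finset.sum_congr rfl hterm, ← Finset.sum_mul, ← Int.cast_sum, conv D hD M]
    have hsupp : Function.support (fun M : ℕ => (rd D M : ℂ) * c ^ M)
        ⊆ Set.range (fun n : ℕ => D * n) := by
      intro M hM
      rcases em (D ∣ M) with ⟨n, rfl⟩ | hn
      · exact ⟨n, rfl⟩
      · exfalso
        apply hM
        simp [rd, hn]
    have hinj : Function.Injective (fun n : ℕ => D * n) := fun a b h =>
      Nat.eq_of_mul_eq_mul_left hD h
    have hre := hinj.tsum_eq hsupp
    have hfn : ∀ n : ℕ, (rd D (D * n) : ℂ) * c ^ (D * n) = (rr n : ℂ) * (c ^ D) ^ n := by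
      intro n
      have h1 : rd D (D * n) = (rr n : ℤ) := by
        simp [rd, Nat.mul_div_cancel_left n hD, dvd_mul_right]
      rw [h1, pow_mul]
      push_cast
      ring
    calc ThetaK ((D : ℂ) * z) = ∑' n : ℕ, (rr n : ℂ) * (c ^ D) ^ n := h2.tsum_eq.symm
      _ = ∑' M : ℕ, (rd D M : ℂ) * c ^ M := by
          rw [← hre]
          exact tsum_congr fun n => (hfn n).symm
      _ = ∑' M : ℕ, ∑ kl ∈ Finset.HasAntidiagonal.antidiagonal M,
            ((rr kl.1 : ℂ) * c ^ kl.1) * ((Acoef D kl.2 : ℂ) * c ^ kl.2) :=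
          (tsum_congr hconv).symm
      _ = (∑' n : ℕ, (rr n : ℂ) * c ^ n) * ∑' M : ℕ, (Acoef D M : ℂ) * c ^ M := cauchy.symm
      _ = ThetaK z * ∑' M : ℕ, (Acoef D M : ℂ)
            * cexp (2 * (Real.pi : ℂ) * I * (M : ℂ) * z) := by
          rw [h1.tsum_eq]
          congr 1
          exact tsum_congr fun M => by rw [hexpM M]
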